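/- Let (Ω, 𝒜, P) be a probability space, X, Y : Ω → ℝ random variables with Y integrable, and ψ : ℝ → ℝ convex with ψ(0) = 0 such that ψ(2Y) and ψ(−2Y) are integrable. If Y = f(X) holds P-almost surely for some Borel measurable function f : ℝ → ℝ, then ∫_{ℝ×ℝ} ψ(E[Y|X = x₁] − E[Y|X = x₂]) d(P^X ⊗ P^X)(x₁,x₂) = ∫_{ℝ×ℝ} ψ(y₁ − y₂) d(P^Y ⊗ P^Y)(y₁,y₂). -/

import Mathlib

open MeasureTheory ProbabilityTheory Filter Set
open scoped ENNReal Topology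

/-- If Y = f(X) almost surely, the sensitivity functional of
conditional expectations attains the value of the normalizing constant. -/
theorem stmt1 {Ω : Type*} [MeasurableSpace Ω] (P : Measure Ω) [IsProbabilityMeasure P]
    (X Y : Ω → ℝ) (hX : Measurable X) (hY : Measurable Y)
    (hYint : Integrable Y P)
    (κ : Kernel ℝ ℝ) [IsMarkovKernel κ]
    (hκ : ∀ A B : Set ℝ, MeasurableSet A → MeasurableSet B →
      P.map (fun ω => (X ω, Y ω)) (A ×ˢ B) = ∫⁻ x in A, κ x B ∂(P.map X))
    (ψ : ℝ → ℝ) (hψ : ConvexOn ℝ Set.univ ψ) (hψ0 : ψ 0 = 0)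
    (hint1 : Integrable (fun ω => ψ (2 * Y ω)) P)
    (hint2 : Integrable (fun ω => ψ (-2 * Y ω)) P)
    (f : ℝ → ℝ) (hf : Measurable f) (hYf : ∀ᵐ ω ∂P, Y ω = f (X ω)) :
    ∫ x : ℝ × ℝ, ψ ((∫ y, y ∂(κ x.1)) - ∫ y, y ∂(κ x.2))
        ∂((P.map X).prod (P.map X)) =
      ∫ y : ℝ × ℝ, ψ (y.1 - y.2) ∂((P.map Y).prod (P.map Y)) := by
  have hcψ : Continuous ψ := continuousOn_univ.mp
    (hψ.continuousOn isOpen_univ)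
  set μ := P.map X with hμdef
  haveI : IsProbabilityMeasure μ := Measure.isProbabilityMeasure_map hX.aemeasurable
  set ρ : Measure (ℝ × ℝ) := P.map (fun ω => (X ω, Y ω)) with hρdef
  haveI : IsProbabilityMeasure ρ :=
    Measure.isProbabilityMeasure_map (hX.prodMk hY).aemeasurable
  have hρfst : ρ.fst = μ := Measure.fst_map_prodMk hY
  -- ρ equals the compProd with κ
  have h1 : ρ = ρ.fst ⊗ₘ κ := by
    haveI : IsProbabilityMeasure (ρ.fst ⊗ₘ κ) := by
      rw [hρfst]; infer_instance
    refine ext_of_generate_finite _ generateFrom_prod.symm isPiSystem_prod ?_ ?_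
    · rintro s ⟨A, hA, B, hB, rfl⟩
      simp only [Set.mem_setOf_eq] at hA hB
      rw [Measure.compProd_apply_prod hA hB, hρfst, hκ A B hA hB]
    · rw [measure_univ, measure_univ]
  -- ρ equals the compProd with the deterministic kernel of f
  have h2 : ρ = ρ.fst ⊗ₘ Kernel.deterministic f hf := by
    haveI : IsProbabilityMeasure (ρ.fst ⊗ₘ Kernel.deterministic f hf) := by
      rw [hρfst]; infer_instance
    refine ext_of_generate_finite _ generateFrom_prod.symm isPiSystem_prod ?_ ?_
    · rintro s ⟨A, hA, B, hB, rfl⟩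
      simp only [Set.mem_setOf_eq] at hA hB
      rw [Measure.compProd_apply_prod hA hB, hρfst]
      have hρ' : ρ = P.map (fun ω => (X ω, f (X ω))) := by
        refine Measure.map_congr ?_
        filter_upwards [hYf] with ω hω using by rw [hω]
      rw [hρ', Measure.map_apply (f := fun ω => (X ω, f (X ω))) (by fun_prop) (hA.prod hB)]
      have : ∫⁻ x in A, (Kernel.deterministic f hf) x B ∂μ
          = ∫⁻ x in A, (f ⁻¹' B).indicator 1 x ∂μ := by
        refine setLIntegral_congr_fun hA (fun x _ => ?_)
        rw [Kernel.deterministic_apply' hf x hB]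
        rfl
      rw [this, lintegral_indicator (hf hB)]
      simp only [Pi.one_apply]
      rw [setLIntegral_one, Measure.restrict_apply (hf hB), hμdef,
        Measure.map_apply hX ((hf hB).inter hA)]
      congr 1
      ext ω
      simp [Set.mk_preimage_prod, Set.mem_preimage, and_comm]
    · rw [measure_univ, measure_univ]
  -- κ is a.e. the dirac kernel at f
  have hae : ∀ᵐ x ∂μ, κ x = Measure.dirac (f x) := by
    have hu1 := eq_condKernel_of_measure_eq_compProd κ h1
    have hu2 := eq_condKernel_of_measure_eq_compProd (Kernel.deterministic f hf) h2
    rw [hρfst] at hu1 hu2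
    filter_upwards [hu1, hu2] with x h1x h2x
    rw [h1x, ← h2x, Kernel.deterministic_apply]
  have hmean : ∀ᵐ x ∂μ, (∫ y, y ∂(κ x)) = f x := by
    filter_upwards [hae] with x hx
    rw [hx, integral_dirac]
  -- transfer to the product measure
  have hfst : ∀ᵐ p : ℝ × ℝ ∂(μ.prod μ), (∫ y, y ∂(κ p.1)) = f p.1 := by
    rw [ae_iff] at hmean ⊢
    refine measure_mono_null
      (show _ ⊆ {x : ℝ | ¬ (∫ y, y ∂(κ x)) = f x} ×ˢ (Set.univ : Set ℝ) from
        fun p hp => ⟨hp, trivial⟩) ?_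
    rw [Measure.prod_prod, hmean, zero_mul]
  have hsnd : ∀ᵐ p : ℝ × ℝ ∂(μ.prod μ), (∫ y, y ∂(κ p.2)) = f p.2 := by
    rw [ae_iff] at hmean ⊢
    refine measure_mono_null
      (show _ ⊆ (Set.univ : Set ℝ) ×ˢ {x : ℝ | ¬ (∫ y, y ∂(κ x)) = f x} from
        fun p hp => ⟨trivial, hp⟩) ?_
    rw [Measure.prod_prod, hmean, mul_zero]
  have hL : ∫ x : ℝ × ℝ, ψ ((∫ y, y ∂(κ x.1)) - ∫ y, y ∂(κ x.2)) ∂(μ.prod μ)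
      = ∫ x : ℝ × ℝ, ψ (f x.1 - f x.2) ∂(μ.prod μ) := by
    refine integral_congr_ae ?_
    filter_upwards [hfst, hsnd] with p h1p h2p
    rw [h1p, h2p]
  -- identify the law of Y
  have hYmap : P.map Y = μ.map f := by
    have : P.map Y = P.map (fun ω => f (X ω)) := Measure.map_congr hYf
    rw [this, hμdef, Measure.map_map hf hX]
    rfl
  have hprod : (P.map Y).prod (P.map Y) = (μ.prod μ).map (Prod.map f f) := by
    rw [hYmap, ← Measure.map_prod_map _ _ hf hf]
  have hsm : AEStronglyMeasurable (fun y : ℝ × ℝ => ψ (y.1 - y.2))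
      ((μ.prod μ).map (Prod.map f f)) :=
    (hcψ.comp (continuous_fst.sub continuous_snd)).aestronglyMeasurable
  rw [hL, hprod, integral_map (hf.prodMap hf).aemeasurable hsm]
  rfl
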